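/- Let m̄ = (m_i)_{i≥1} be a bounded sequence of integers with m_i ≥ 2. Then the group H_m̄ of directed automorphisms along the 0-ray is locally finite: every finite subset of H_m̄ generates a finite subgroup. -/

import Mathlib

open scoped ENNReal
namespace Paper
abbrev Vertex (m : ℕ → ℕ) (n : ℕ) := (i : Fin n) → Fin (m i)
variable {m : ℕ → ℕ}
def restr {n : ℕ} (w : Vertex m (n + 1)) : Vertex m n := fun i => w i.castSucc
def restrLe {n N : ℕ} (h : n ≤ N) (w : Vertex m N) : Vertex m n :=
  fun i => w ⟨i, lt_of_lt_of_le i.2 h⟩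
def AutT (m : ℕ → ℕ) : Subgroup (∀ n, Equiv.Perm (Vertex m n)) where
  carrier := {g | ∀ (n : ℕ) (w : Vertex m (n + 1)), restr (g (n + 1) w) = g n (restr w)}
  one_mem' := by intro n w; rfl
  mul_mem' := by
    intro a b ha hb n w
    show restr ((a (n+1)) ((b (n+1)) w)) = (a n) ((b n) (restr w))
    rw [ha, hb]
  inv_mem' := by
    intro a ha n w
    show restr ((a (n+1))⁻¹ w) = (a n)⁻¹ (restr w)
    apply (a n).injective
    have h1 := ha n ((a (n+1))⁻¹ w)
    rw [show (a (n+1)) ((a (n+1))⁻¹ w) = w from (a (n+1)).apply_symm_apply w] at h1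
    rw [← h1]
    exact ((a n).apply_symm_apply _).symm
def app {n : ℕ} (g : AutT m) (v : Vertex m n) : Vertex m n := g.val n v
theorem restrLe_app (g : AutT m) : ∀ {N n : ℕ} (h : n ≤ N) (w : Vertex m N),
    restrLe h (g.val N w) = g.val n (restrLe h w) := by
  intro N
  induction N with
  | zero =>
    intro n h w
    have hn : n = 0 := Nat.le_zero.mp h
    subst hn; rfl
  | succ N ih =>
    intro n h w
    rcases Nat.eq_or_lt_of_le h with rfl | h'
    · rfl
    · have hN : n ≤ N := Nat.lt_succ_iff.mp h'
      calc restrLe h (g.val (N+1) w) = restrLe hN (restr (g.val (N+1) w)) := rfl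
        _ = restrLe hN (g.val N (restr w)) := by rw [g.prop N w]
        _ = g.val n (restrLe hN (restr w)) := ih hN _
        _ = g.val n (restrLe h w) := rfl
abbrev shift (m : ℕ → ℕ) (n : ℕ) : ℕ → ℕ := fun i => m (n + i)
def vappend {n k : ℕ} (v : Vertex (shift m n) k) (w : Vertex m n) : Vertex m (n + k) :=
  fun i => if h : (i : ℕ) < n then w ⟨i, h⟩
    else Fin.cast (congrArg m (by omega : n + ((i : ℕ) - n) = (i : ℕ)))
      (v ⟨(i : ℕ) - n, by omega⟩)
def topPart {n k : ℕ} (u : Vertex m (n + k)) : Vertex (shift m n) k :=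
  fun i => u ⟨n + i, by omega⟩

theorem topPart_vappend {n k : ℕ} (v : Vertex (shift m n) k) (w : Vertex m n) :
    topPart (vappend v w) = v := by
  funext i
  simp only [topPart, vappend, Fin.val_mk]
  rw [dif_neg (by omega)]
  apply Fin.ext
  simp only [Fin.coe_cast]
  exact congrArg (fun t : Fin k => (v t).1) (Fin.ext (by simp))

theorem restrLe_vappend {n k : ℕ} (v : Vertex (shift m n) k) (w : Vertex m n) :
    restrLe (Nat.le_add_right n k) (vappend v w) = w := by
  funext i
  simp only [restrLe, vappend, Fin.val_mk]
  rw [dif_pos i.2]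

theorem vappend_topPart {n k : ℕ} (u : Vertex m (n + k)) :
    vappend (topPart u) (restrLe (Nat.le_add_right n k) u) = u := by
  funext i
  by_cases h : (i : ℕ) < n
  · simp only [vappend, restrLe]
    rw [dif_pos h]
  · simp only [vappend, topPart, Fin.val_mk]
    rw [dif_neg h]
    apply Fin.ext
    simp only [Fin.coe_cast]
    exact congrArg (fun t : Fin (n+k) => (u t).1) (Fin.ext (by simp; omega))

theorem restr_vappend {n k : ℕ} (v : Vertex (shift m n) (k + 1)) (w : Vertex m n) :
    restr (n := n + k) (vappend (n := n) (k := k + 1) v w) = vappend (restr v) w := by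
  funext i
  by_cases h : (i : ℕ) < n
  · show vappend v w (Fin.castSucc i) = vappend (restr v) w i
    simp only [vappend]
    rw [dif_pos (show ((Fin.castSucc i : Fin (n+k+1)) : ℕ) < n from h), dif_pos h]
    rfl
  · show vappend v w (Fin.castSucc i) = vappend (restr v) w i
    simp only [vappend]
    rw [dif_neg (show ¬ ((Fin.castSucc i : Fin (n+k+1)) : ℕ) < n from h), dif_neg h]
    rfl

def secFun (g : AutT m) {n : ℕ} (w : Vertex m n) (k : ℕ)
    (v : Vertex (shift m n) k) : Vertex (shift m n) k :=
  topPart (g.val (n + k) (vappend v w))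

theorem secFun_spec (g : AutT m) {n : ℕ} (w : Vertex m n) (k : ℕ)
    (v : Vertex (shift m n) k) :
    g.val (n + k) (vappend v w) = vappend (secFun g w k v) (g.val n w) := by
  have h1 : restrLe (Nat.le_add_right n k) (g.val (n + k) (vappend v w)) = g.val n w := by
    rw [restrLe_app, restrLe_vappend]
  conv_lhs => rw [← vappend_topPart (g.val (n + k) (vappend v w))]
  rw [h1]
  rfl

theorem coe_inv_app (g : AutT m) (N : ℕ) (u : Vertex m N) :
    (g⁻¹ : AutT m).val N ((g : AutT m).val N u) = u := by
  have h : ((g⁻¹ : AutT m) : ∀ n, Equiv.Perm (Vertex m n)) = (↑g)⁻¹ := rfl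
  rw [h]
  exact Equiv.symm_apply_apply _ _

theorem secFun_left_inv (g : AutT m) {n : ℕ} (w : Vertex m n) (k : ℕ)
    (v : Vertex (shift m n) k) :
    secFun g⁻¹ (g.val n w) k (secFun g w k v) = v := by
  show topPart ((g⁻¹ : AutT m).val (n+k) (vappend (secFun g w k v) (g.val n w))) = v
  rw [← secFun_spec g w k v, coe_inv_app, topPart_vappend]

def sectionEquiv (g : AutT m) {n : ℕ} (w : Vertex m n) (k : ℕ) :
    Equiv.Perm (Vertex (shift m n) k) where
  toFun := secFun g w k
  invFun := secFun g⁻¹ (g.val n w) k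
  left_inv v := secFun_left_inv g w k v
  right_inv v := by
    have h2 : (g⁻¹ : AutT m)⁻¹ = g := inv_inv g
    have h3 : (g⁻¹ : AutT m).val n (g.val n w) = w := coe_inv_app g n w
    calc secFun g w k (secFun g⁻¹ (g.val n w) k v)
        = secFun (g⁻¹)⁻¹ ((g⁻¹ : AutT m).val n (g.val n w)) k
            (secFun g⁻¹ (g.val n w) k v) := by rw [h2, h3]
      _ = v := secFun_left_inv g⁻¹ (g.val n w) k v

theorem secFun_restr (g : AutT m) {n : ℕ} (w : Vertex m n) (k : ℕ)
    (v : Vertex (shift m n) (k + 1)) :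
    restr (secFun g w (k + 1) v) = secFun g w k (restr v) := by
  show restr (topPart (g.val (n + (k+1)) (vappend v w)))
      = topPart (g.val (n + k) (vappend (restr v) w))
  rw [← restr_vappend (n := n) (k := k) v w, ← g.prop (n + k) (vappend (n := n) (k := k + 1) v w)]
  rfl

/-- The section `g|_w` of a tree automorphism `g` at the level-`n` vertex `w`:
the unique automorphism of the shifted tree satisfying `(vw)·g = (v·g|_w)(w·g)`. -/
def sectionAut (g : AutT m) {n : ℕ} (w : Vertex m n) : AutT (shift m n) :=
  ⟨fun k => sectionEquiv g w k, fun k v => secFun_restr g w k v⟩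


/-! ### Distinguished vertices and predicates -/

/-- The level-`n` vertex `0⋯0` on the `0`-ray. -/
def rayV (hm : ∀ i, 0 < m i) (n : ℕ) : Vertex m n := fun i => ⟨0, hm i⟩

/-- The level-`(n+1)` neighbour `x0⋯0` of the `0`-ray: its only (possibly) non-zero
letter is the leading one, equal to `x`. -/
def nbrV (hm : ∀ i, 0 < m i) {n : ℕ} (x : Fin (m n)) : Vertex m (n + 1) :=
  fun i => if h : (i : ℕ) = n then Fin.cast (congrArg m h).symm x else ⟨0, hm i⟩

/-- The level-`n` vertex obtained from `w0` by prepending zeros. -/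
def padZero (hm : ∀ i, 0 < m i) {n₀ : ℕ} (w0 : Vertex m n₀) (n : ℕ) : Vertex m n :=
  fun i => if h : (i : ℕ) < n₀ then w0 ⟨i, h⟩ else ⟨0, hm i⟩

/-- The level-`(n+1)` vertex `x0⋯0w0`: the word `w0` at the bottom, the letter `x`
in the leading position, and zeros in between. -/
def padLead (hm : ∀ i, 0 < m i) {n₀ : ℕ} (w0 : Vertex m n₀) {n : ℕ} (x : Fin (m n)) :
    Vertex m (n + 1) :=
  fun i => if h : (i : ℕ) < n₀ then w0 ⟨i, h⟩
    else if h2 : (i : ℕ) = n then Fin.cast (congrArg m h2).symm x else ⟨0, hm i⟩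

/-- `w` lies on the `0`-ray. -/
def OnRay {n : ℕ} (w : Vertex m n) : Prop := ∀ i, (w i : ℕ) = 0

/-- `w` is a neighbour of the `0`-ray: its leading letter is non-zero and all other
letters are zero. -/
def IsNbr {n : ℕ} (w : Vertex m n) : Prop :=
  ∃ hn : 0 < n, (w ⟨n - 1, by omega⟩ : ℕ) ≠ 0 ∧
    ∀ i : Fin n, (i : ℕ) < n - 1 → (w i : ℕ) = 0

/-- A *rooted* automorphism: it permutes the first level and all its sections at
vertices of level `≥ 1` are trivial (i.e. it is an element of `Sym(X_{m_1})`). -/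
def IsRooted (g : AutT m) : Prop :=
  ∀ (n : ℕ) (w : Vertex m n), 0 < n → sectionAut g w = 1

/-- A *directed automorphism along the `0`-ray* (an element of `H_m̄`): it fixes the
`0`-ray, its sections away from the ray and its neighbours are trivial, and its
sections at neighbours of the ray are rooted. -/
def IsDirectedAut (g : AutT m) : Prop :=
  (∀ (n : ℕ) (w : Vertex m n), OnRay w → g.val n w = w) ∧
  (∀ (n : ℕ) (w : Vertex m n), ¬ OnRay w → ¬ IsNbr w → sectionAut g w = 1) ∧
  (∀ (n : ℕ) (w : Vertex m n), IsNbr w → IsRooted (sectionAut g w))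

/-- The group `𝒜_n` of `n`-th level sections of `𝒜` along the `0`-ray. -/
def Asub (hm : ∀ i, 0 < m i) (A : Subgroup (AutT m)) (n : ℕ) :
    Subgroup (AutT (shift m n)) :=
  Subgroup.closure {h | ∃ a ∈ A, h = sectionAut a (rayV hm n)}

/-- The group `ℬ_n` generated by the `n`-th level sections of `𝒜` at the neighbours
of the `0`-ray (trivial for `n = 0`, where there are no neighbours). -/
def Bsub (hm : ∀ i, 0 < m i) (A : Subgroup (AutT m)) : (n : ℕ) → Subgroup (AutT (shift m n))
  | 0 => ⊥
  | (k + 1) =>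
    Subgroup.closure {h | ∃ a ∈ A, ∃ x : Fin (m k), (x : ℕ) ≠ 0 ∧ h = sectionAut a (nbrV hm x)}

/-- The condition, for a word `w`, that position `i` is the position situated just
above the lowest non-zero letter of `w`. -/
def SpineCond {n : ℕ} (w : Vertex m n) (i : Fin n) : Prop :=
  ∃ p : Fin n, (w p : ℕ) ≠ 0 ∧ (∀ q : Fin n, (q : ℕ) < (p : ℕ) → (w q : ℕ) = 0) ∧
    (i : ℕ) = (p : ℕ) + 1

open Classical in
/-- The action of the spine-permutation automorphism `h_σ̄`: the letter just above
the lowest non-zero letter is permuted (by the permutation attached to its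
alphabet size); all-zero words are fixed. -/
noncomputable def spineFun (σ : ∀ j : ℕ, Equiv.Perm (Fin j)) {n : ℕ} (w : Vertex m n) :
    Vertex m n :=
  fun i => if SpineCond w i then (σ (m i)) (w i) else w i

/-! ### Probability measures, entropy, random walks -/

/-- `μ` is a probability measure (given by its density on a discrete group/set). -/
def IsProbMeas {G : Type*} (μ : G → ℝ) : Prop := (∀ g, 0 ≤ μ g) ∧ HasSum μ 1

/-- `μ` is symmetric. -/
def IsSymmMeas {G : Type*} [Group G] (μ : G → ℝ) : Prop := ∀ g, μ g⁻¹ = μ g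

/-- Convolution of two measures on a discrete group. -/
noncomputable def conv {G : Type*} [Group G] (μ ν : G → ℝ) : G → ℝ :=
  fun g => ∑' h, μ h * ν (h⁻¹ * g)

open Classical in
/-- `k`-fold convolution power `μ^{*k}` (with `μ^{*0} = δ_e`). -/
noncomputable def convPow {G : Type*} [Group G] (μ : G → ℝ) : ℕ → G → ℝ
  | 0 => fun g => if g = 1 then 1 else 0
  | (k + 1) => conv μ (convPow μ k)

/-- Shannon entropy `H(p) = -∑ p log p` of a discrete measure. -/
noncomputable def entropy {X : Type*} (p : X → ℝ) : ℝ := ∑' x, Real.negMulLog (p x)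

/-- Shannon entropy, valued in `ℝ≥0∞`. -/
noncomputable def entropyE {X : Type*} (p : X → ℝ) : ℝ≥0∞ :=
  ∑' x, ENNReal.ofReal (Real.negMulLog (p x))

/-- The Liouville property: every bounded `μ`-harmonic function is constant on the
subgroup generated by the support of `μ`. -/
def IsLiouville {G : Type*} [Group G] (μ : G → ℝ) : Prop :=
  ∀ f : G → ℝ, (∃ C, ∀ g, |f g| ≤ C) → (∀ g, f g = ∑' h, f (g * h) * μ h) →
    ∀ g ∈ Subgroup.closure (Function.support μ),
      ∀ h ∈ Subgroup.closure (Function.support μ), f g = f h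

/-- The position of the right random walk after `t` steps, as a function of the
increments `s 0, s 1, …` (the group element `s_t ⋯ s_2 s_1`; with this convention,
applying it to a point `x` performs the corresponding right walk on any space the
group acts on from the right). -/
def rwProd {G : Type*} [Group G] {k : ℕ} (s : Fin k → G) (t : ℕ) : G :=
  (((List.ofFn s).take t).reverse).prod

open Classical in
/-- The law of the pair (section/position) of the right `μ`-random walk observed at
the `j`-th visit of the trajectory `v·g_1, v·g_2, …` to the set `W`:
`visitLaw μ act v W sec j (h, u) = P(g at j-th visit has sec = h and position = u)`.
Here `act` is the (right) action used for the trajectory and `sec` the observable. -/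
noncomputable def visitLaw {G X H : Type*} [Group G] (μ : G → ℝ)
    (act : G → X → X) (v : X) (W : Set X) (sec : G → H) (j : ℕ) : H × X → ℝ :=
  fun p =>
    ∑' k : ℕ, ∑' s : Fin k → G,
      (∏ i, μ (s i)) *
        (if ((Finset.range k).filter fun t => act (rwProd s (t + 1)) v ∈ W).card = j
            ∧ act (rwProd s k) v ∈ W
            ∧ (sec (rwProd s k), act (rwProd s k) v) = p
          then 1 else 0)

/-! ### Electrical networks -/

/-- The Dirichlet energy of `f` with respect to the symmetric conductances `c`. -/
noncomputable def dirichlet {V : Type*} [Fintype V] (c : V → V → ℝ) (f : V → ℝ) : ℝ :=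
  (1 / 2) * ∑ u : V, ∑ v : V, c u v * (f u - f v) ^ 2

/-- Effective conductance between the disjoint vertex sets `A` and `B`. -/
noncomputable def effCond {V : Type*} [Fintype V] (c : V → V → ℝ) (A B : Set V) : ℝ :=
  sInf (dirichlet c '' {f | (∀ a ∈ A, f a = 1) ∧ (∀ b ∈ B, f b = 0)})

/-- Effective resistance between `A` and `B`, valued in `ℝ≥0∞` (infinite when the
effective conductance vanishes). -/
noncomputable def effResE {V : Type*} [Fintype V] (c : V → V → ℝ) (A B : Set V) : ℝ≥0∞ :=
  (ENNReal.ofReal (effCond c A B))⁻¹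

open Classical in
/-- Conductances of the Schreier graph of the action on level `n` with (multi-)edges
given by a generating set: `c u v = #{s ∈ gens : u·s = v}` for `u ≠ v`. -/
noncomputable def schreierCond (gens : Set (AutT m)) (n : ℕ) :
    Vertex m n → Vertex m n → ℝ :=
  fun u v => if u = v then 0 else (Set.ncard {s | s ∈ gens ∧ app s u = v} : ℝ)

open Classical in
/-- Conductances of the Schreier graph of the action on level `n`, with weights
`κ s` on the edge corresponding to the generator `s`. -/
noncomputable def schreierCondWt (S : Finset (AutT m)) (κ : AutT m → ℝ) (n : ℕ) :
    Vertex m n → Vertex m n → ℝ :=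
  fun u v => if u = v then 0 else ∑ s ∈ S.filter (fun s => app s u = v), κ s

/-- The set `𝔸_n` of level-`n` vertices where some generator `s ∈ S` has a
non-trivial section lying in `𝒜_n`. -/
def ASet (hm : ∀ i, 0 < m i) (A : Subgroup (AutT m)) (S : Finset (AutT m)) (n : ℕ) :
    Set (Vertex m n) :=
  {w | ∃ s ∈ S, sectionAut s w ∈ Asub hm A n ∧ sectionAut s w ≠ 1}

/-- The set `𝔹_n` of level-`n` vertices where some generator `s ∈ S` has a
non-trivial section lying in `ℬ_n`. -/
def BSet (hm : ∀ i, 0 < m i) (A : Subgroup (AutT m)) (S : Finset (AutT m)) (n : ℕ) :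
    Set (Vertex m n) :=
  {w | ∃ s ∈ S, sectionAut s w ∈ Bsub hm A n ∧ sectionAut s w ≠ 1}

/-- The orbit of a level-`n` vertex under a subgroup `G ≤ Aut(T_m)`. -/
def orbitOf (G : Subgroup (AutT m)) {n : ℕ} (v : Vertex m n) : Set (Vertex m n) :=
  {u | ∃ g : AutT m, g ∈ G ∧ app g v = u}

/-! ### Regular trees and automata -/

/-- The constant valency sequence (regular rooted tree `T_mm`). -/
abbrev constSeq (mm : ℕ) : ℕ → ℕ := fun _ => mm


/-- An invertible automaton over the alphabet of a regular tree: a finite set of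
automorphisms closed under taking sections at one-letter words. -/
def IsAutomaton {mm : ℕ} (A : Finset (AutT (constSeq mm))) : Prop :=
  ∀ a ∈ A, ∀ x : Vertex (constSeq mm) 1, sectionAut a x ∈ A

/-- Bounded activity: for every state `a`, the number of level-`n` words with
non-trivial section is bounded uniformly in `n`. -/
def IsBoundedActivity {mm : ℕ} (A : Finset (AutT (constSeq mm))) : Prop :=
  ∀ a ∈ A, ∃ B : ℕ, ∀ n : ℕ,
    Set.ncard {w : Vertex (constSeq mm) n | sectionAut a w ≠ 1} ≤ B

/-- Word length with respect to a finite symmetric generating set. -/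
noncomputable def wordLen {G : Type*} [Group G] (S : Set G) (g : G) : ℕ :=
  sInf {k | ∃ l : List G, l.length = k ∧ (∀ s ∈ l, s ∈ S) ∧ l.prod = g}


/-! ### Auxiliary development for local finiteness -/

section LocFin

lemma vext {N : ℕ} {u v : Vertex m N} (h : ∀ i : Fin N, (u i : ℕ) = (v i : ℕ)) : u = v :=
  funext fun i => Fin.ext (h i)

/-- Cast a vertex along an equality of levels. -/
def vcast {N N' : ℕ} (h : N = N') (w : Vertex m N) : Vertex m N' :=
  fun i => ⟨(w ⟨i.val, h ▸ i.2⟩).val, (w ⟨i.val, h ▸ i.2⟩).2⟩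

lemma vcast_rfl {N : ℕ} (w : Vertex m N) : vcast rfl w = w := vext fun _ => rfl

lemma gval_vcast (g : AutT m) {N N' : ℕ} (h : N = N') (w : Vertex m N) :
    g.val N' (vcast h w) = vcast h (g.val N w) := by subst h; rw [vcast_rfl, vcast_rfl]

variable (hm : ∀ i, 0 < m i)

lemma nbrV_val {n : ℕ} (x : Fin (m n)) (i : Fin (n + 1)) :
    (nbrV hm x i : ℕ) = if (i : ℕ) = n then (x : ℕ) else 0 := by
  by_cases h : (i : ℕ) = n
  · simp [nbrV, h]
  · simp [nbrV, h]

/-- The level-`(n+2)` vertex `y x 0 ⋯ 0`. -/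
def Wv {n : ℕ} (x : Fin (m n)) (y : Fin (m (n + 1))) : Vertex m (n + 2) :=
  padLead hm (nbrV hm x) y

lemma Wv_val {n : ℕ} (x : Fin (m n)) (y : Fin (m (n + 1))) (i : Fin (n + 2)) :
    (Wv hm x y i : ℕ) =
      if (i : ℕ) = n then (x : ℕ) else if (i : ℕ) = n + 1 then (y : ℕ) else 0 := by
  by_cases h1 : (i : ℕ) = n
  · have hlt : (i : ℕ) < n + 1 := by omega
    simp only [Wv, padLead, dif_pos hlt, if_pos h1]
    have := nbrV_val hm x ⟨(i : ℕ), hlt⟩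
    simpa [h1] using this
  · by_cases h2 : (i : ℕ) = n + 1
    · have hlt : ¬ (i : ℕ) < n + 1 := by omega
      simp [Wv, padLead, hlt, h1, h2]
    · have hlt : (i : ℕ) < n + 1 := by omega
      simp only [Wv, padLead, dif_pos hlt, if_neg h1, if_neg h2]
      have := nbrV_val hm x ⟨(i : ℕ), hlt⟩
      simpa [h1] using this

lemma restr_Wv {n : ℕ} (x : Fin (m n)) (y : Fin (m (n + 1))) :
    restr (Wv hm x y) = nbrV hm x := by
  funext i
  show padLead hm (nbrV hm x) y (Fin.castSucc i) = nbrV hm x i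
  have hlt : ((Fin.castSucc i : Fin (n + 2)) : ℕ) < n + 1 := i.2
  simp only [padLead, dif_pos hlt]
  apply Fin.ext
  rw [nbrV_val, nbrV_val]
  simp

/-- The first-level data of `g` along the ray: permutation of the letter at position `n`. -/
def πd (g : AutT m) (n : ℕ) (x : Fin (m n)) : Fin (m n) :=
  g.val (n + 1) (nbrV hm x) ⟨n, Nat.lt_succ_self n⟩

/-- The data of `g` at the level-`(n+1)` neighbours: action on the letter at position `n+1`. -/
def τd (g : AutT m) (n : ℕ) (x : Fin (m n)) (y : Fin (m (n + 1))) : Fin (m (n + 1)) :=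
  g.val (n + 2) (Wv hm x y) ⟨n + 1, by omega⟩

/-- The letter at position `n` of the image of `y x 0⋯0` is given by `πd`. -/
lemma gWv_n (g : AutT m) {n : ℕ} (x : Fin (m n)) (y : Fin (m (n + 1))) :
    g.val (n + 2) (Wv hm x y) ⟨n, by omega⟩ = πd hm g n x := by
  have h := g.prop (n + 1) (Wv hm x y)
  rw [restr_Wv] at h
  exact congrFun h ⟨n, Nat.lt_succ_self n⟩

/-- The structural predicate satisfied by directed automorphisms and stable under
products and inverses: the `0`-ray is fixed and only the letters at positions `p`
and `p+1` may move, where `p` is the lowest non-zero position. -/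
def Pd (g : AutT m) : Prop :=
  (∀ (N : ℕ) (w : Vertex m N), (∀ i, (w i : ℕ) = 0) → g.val N w = w) ∧
  (∀ (N : ℕ) (w : Vertex m N) (p i : Fin N), (w p : ℕ) ≠ 0 →
    (∀ q : Fin N, (q : ℕ) < (p : ℕ) → (w q : ℕ) = 0) →
    (i : ℕ) ≠ (p : ℕ) → (i : ℕ) ≠ (p : ℕ) + 1 → g.val N w i = w i)

lemma restrLe_eq_nbrV {N : ℕ} (w : Vertex m N) (p : Fin N)
    (hmin : ∀ q : Fin N, (q : ℕ) < (p : ℕ) → (w q : ℕ) = 0) :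
    restrLe (Nat.succ_le_of_lt p.2) w = nbrV hm (w p) := by
  apply vext
  intro i
  rw [nbrV_val]
  by_cases h : (i : ℕ) = (p : ℕ)
  · rw [if_pos h]
    have hip : (⟨(i : ℕ), lt_of_lt_of_le i.2 (Nat.succ_le_of_lt p.2)⟩ : Fin N) = p :=
      Fin.ext h
    exact congrArg (fun j : Fin N => (w j : ℕ)) hip
  · have hlt : (i : ℕ) < (p : ℕ) := by omega
    rw [if_neg h]
    exact hmin ⟨(i : ℕ), by omega⟩ hlt

lemma restrLe_eq_Wv {N : ℕ} (w : Vertex m N) (p : Fin N) (hp1 : (p : ℕ) + 1 < N)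
    (hmin : ∀ q : Fin N, (q : ℕ) < (p : ℕ) → (w q : ℕ) = 0) :
    restrLe (by omega : (p : ℕ) + 2 ≤ N) w = Wv hm (w p) (w ⟨(p : ℕ) + 1, hp1⟩) := by
  apply vext
  intro i
  rw [Wv_val]
  by_cases h : (i : ℕ) = (p : ℕ)
  · rw [if_pos h]
    have hip : (⟨(i : ℕ), lt_of_lt_of_le i.2 (by omega : (p : ℕ) + 2 ≤ N)⟩ : Fin N) = p :=
      Fin.ext h
    exact congrArg (fun j : Fin N => (w j : ℕ)) hip
  · rw [if_neg h]
    by_cases h2 : (i : ℕ) = (p : ℕ) + 1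
    · rw [if_pos h2]
      have hip : (⟨(i : ℕ), lt_of_lt_of_le i.2 (by omega : (p : ℕ) + 2 ≤ N)⟩ : Fin N) =
          ⟨(p : ℕ) + 1, hp1⟩ := Fin.ext h2
      exact congrArg (fun j : Fin N => (w j : ℕ)) hip
    · rw [if_neg h2]
      have hlt : (i : ℕ) < (p : ℕ) := by omega
      exact hmin ⟨(i : ℕ), by omega⟩ hlt

/-- The letter at the lowest non-zero position is transformed by `πd` — for every
automorphism. -/
lemma FP (g : AutT m) {N : ℕ} (w : Vertex m N) (p : Fin N)
    (hmin : ∀ q : Fin N, (q : ℕ) < (p : ℕ) → (w q : ℕ) = 0) :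
    g.val N w p = πd hm g (p : ℕ) (w p) := by
  unfold πd
  rw [← restrLe_eq_nbrV hm w p hmin, ← restrLe_app g (Nat.succ_le_of_lt p.2) w]
  rfl

/-- The letter just above the lowest non-zero position is transformed by `τd` — for
every automorphism. -/
lemma FT (g : AutT m) {N : ℕ} (w : Vertex m N) (p : Fin N) (hp1 : (p : ℕ) + 1 < N)
    (hmin : ∀ q : Fin N, (q : ℕ) < (p : ℕ) → (w q : ℕ) = 0) :
    g.val N w ⟨(p : ℕ) + 1, hp1⟩ = τd hm g (p : ℕ) (w p) (w ⟨(p : ℕ) + 1, hp1⟩) := by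
  unfold τd
  rw [← restrLe_eq_Wv hm w p hp1 hmin, ← restrLe_app g (by omega : (p : ℕ) + 2 ≤ N) w]
  rfl

lemma pid_zero {g : AutT m} (hg : Pd g) {n : ℕ} (x : Fin (m n)) (hx : (x : ℕ) = 0) :
    (πd hm g n x : ℕ) = 0 := by
  have hzero : ∀ i, (nbrV hm x i : ℕ) = 0 := by
    intro i; rw [nbrV_val]; split <;> simp [hx]
  unfold πd
  rw [hg.1 (n + 1) (nbrV hm x) hzero]
  exact hzero _

lemma nbrV_app_top {n : ℕ} (x : Fin (m n)) :
    nbrV hm x ⟨n, Nat.lt_succ_self n⟩ = x := by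
  apply Fin.ext
  rw [nbrV_val]
  simp

lemma Wv_app_n {n : ℕ} (x : Fin (m n)) (y : Fin (m (n + 1))) :
    Wv hm x y ⟨n, by omega⟩ = x := by
  apply Fin.ext
  rw [Wv_val]
  simp

lemma Wv_app_top {n : ℕ} (x : Fin (m n)) (y : Fin (m (n + 1))) :
    Wv hm x y ⟨n + 1, by omega⟩ = y := by
  apply Fin.ext
  rw [Wv_val]
  simp

/-- `g` maps neighbour vertices to neighbour vertices according to its data. -/
lemma KN {g : AutT m} (hg : Pd g) {n : ℕ} (x : Fin (m n)) :
    g.val (n + 1) (nbrV hm x) = nbrV hm (πd hm g n x) := by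
  by_cases hx : (x : ℕ) = 0
  · have hzero : ∀ i, (nbrV hm x i : ℕ) = 0 := by
      intro i; rw [nbrV_val]; split <;> simp [hx]
    rw [hg.1 (n + 1) (nbrV hm x) hzero]
    apply vext
    intro i
    rw [hzero i, nbrV_val]
    split
    · exact (pid_zero hm hg x hx).symm
    · rfl
  · have hmin : ∀ q : Fin (n + 1),
        (q : ℕ) < ((⟨n, Nat.lt_succ_self n⟩ : Fin (n + 1)) : ℕ) → (nbrV hm x q : ℕ) = 0 := by
      intro q hq
      simp only [Fin.val_mk] at hq
      rw [nbrV_val, if_neg (by omega)]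
    apply vext
    intro i
    rw [nbrV_val]
    by_cases h : (i : ℕ) = n
    · rw [if_pos h]
      have hip : i = ⟨n, Nat.lt_succ_self n⟩ := Fin.ext h
      rw [hip]
      rfl
    · rw [if_neg h]
      rw [hg.2 (n + 1) (nbrV hm x) ⟨n, Nat.lt_succ_self n⟩ i
        (by rw [nbrV_app_top]; exact hx) hmin (by simpa using h)
        (by simp only [Fin.val_mk]; omega)]
      rw [nbrV_val, if_neg h]

/-- `g` maps the vertices `y x 0⋯0` to vertices of the same shape according to its
data. -/
lemma KW {g : AutT m} (hg : Pd g) {n : ℕ} (x : Fin (m n)) (y : Fin (m (n + 1))) :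
    g.val (n + 2) (Wv hm x y) = Wv hm (πd hm g n x) (τd hm g n x y) := by
  by_cases hx : (x : ℕ) = 0
  · by_cases hy : (y : ℕ) = 0
    · have hzero : ∀ i, (Wv hm x y i : ℕ) = 0 := by
        intro i; rw [Wv_val]; split_ifs <;> simp [hx, hy]
      have hτ : (τd hm g n x y : ℕ) = 0 := by
        unfold τd
        rw [hg.1 _ _ hzero]
        exact hzero _
      rw [hg.1 _ _ hzero]
      apply vext
      intro i
      rw [hzero i, Wv_val]
      split_ifs
      · exact (pid_zero hm hg x hx).symm
      · exact hτ.symm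
      · rfl
    · -- x = 0, y ≠ 0 : lowest non-zero position is the top, n+1
      have hp : (Wv hm x y ⟨n + 1, by omega⟩ : ℕ) ≠ 0 := by
        rw [Wv_app_top]; exact hy
      have hmin : ∀ q : Fin (n + 2),
          (q : ℕ) < ((⟨n + 1, by omega⟩ : Fin (n + 2)) : ℕ) → (Wv hm x y q : ℕ) = 0 := by
        intro q hq
        simp only [Fin.val_mk] at hq
        rw [Wv_val]
        split_ifs with a b
        · exact hx
        · omega
        · rfl
      apply vext
      intro i
      rw [Wv_val]
      by_cases h2 : (i : ℕ) = n + 1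
      · have hip : i = ⟨n + 1, by omega⟩ := Fin.ext h2
        rw [if_neg (by omega), if_pos h2, hip]
        rfl
      · rw [hg.2 (n + 2) (Wv hm x y) ⟨n + 1, by omega⟩ i hp hmin
          (by simpa using h2) (by simp only [Fin.val_mk]; have := i.2; omega)]
        rw [Wv_val]
        split_ifs with a
        · rw [hx, pid_zero hm hg x hx]
        · rfl
  · -- x ≠ 0 : lowest non-zero position is n
    have hp : (Wv hm x y ⟨n, by omega⟩ : ℕ) ≠ 0 := by
      rw [Wv_app_n]; exact hx
    have hmin : ∀ q : Fin (n + 2),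
        (q : ℕ) < ((⟨n, by omega⟩ : Fin (n + 2)) : ℕ) → (Wv hm x y q : ℕ) = 0 := by
      intro q hq
      simp only [Fin.val_mk] at hq
      rw [Wv_val]
      split_ifs with a b
      · omega
      · omega
      · rfl
    apply vext
    intro i
    rw [Wv_val]
    by_cases h1 : (i : ℕ) = n
    · have hip : i = ⟨n, by omega⟩ := Fin.ext h1
      rw [if_pos h1, hip, gWv_n]
    · by_cases h2 : (i : ℕ) = n + 1
      · have hip : i = ⟨n + 1, by omega⟩ := Fin.ext h2
        rw [if_neg h1, if_pos h2, hip]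
        rfl
      · rw [hg.2 (n + 2) (Wv hm x y) ⟨n, by omega⟩ i hp hmin
          (by simpa using h1) (by simpa using h2)]
        rw [Wv_val, if_neg h1, if_neg h2, if_neg h1, if_neg h2]

lemma pid_inj {g : AutT m} (hg : Pd g) (n : ℕ) : Function.Injective (πd hm g n) := by
  intro a b hab
  have h2 : nbrV hm a = nbrV hm b := by
    apply (g.val (n + 1)).injective
    rw [KN hm hg a, KN hm hg b, hab]
  have h3 := congrFun h2 ⟨n, Nat.lt_succ_self n⟩
  rwa [nbrV_app_top, nbrV_app_top] at h3

lemma taud_inj {g : AutT m} (hg : Pd g) (n : ℕ) (x : Fin (m n)) :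
    Function.Injective (τd hm g n x) := by
  intro a b hab
  have h2 : Wv hm x a = Wv hm x b := by
    apply (g.val (n + 2)).injective
    rw [KW hm hg x a, KW hm hg x b, hab]
  have h3 := congrFun h2 ⟨n + 1, by omega⟩
  rwa [Wv_app_top, Wv_app_top] at h3

lemma pid_ne_zero {g : AutT m} (hg : Pd g) {n : ℕ} {x : Fin (m n)} (hx : (x : ℕ) ≠ 0) :
    (πd hm g n x : ℕ) ≠ 0 := by
  intro h0
  apply hx
  have h1 : πd hm g n x = πd hm g n ⟨0, hm n⟩ := by
    apply Fin.ext
    rw [h0, pid_zero hm hg ⟨0, hm n⟩ rfl]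
  have := pid_inj hm hg n h1
  rw [this]

lemma mul_val (g h : AutT m) (N : ℕ) (w : Vertex m N) :
    (g * h).val N w = g.val N (h.val N w) := rfl

lemma one_val (N : ℕ) (w : Vertex m N) : (1 : AutT m).val N w = w := rfl

lemma Pd_one : Pd (1 : AutT m) :=
  ⟨fun _ _ _ => rfl, fun _ _ _ _ _ _ _ _ => rfl⟩

include hm in
lemma Pd_mul {g h : AutT m} (hg : Pd g) (hh : Pd h) : Pd (g * h) := by
  constructor
  · intro N w hw
    rw [mul_val, hh.1 N w hw, hg.1 N w hw]
  · intro N w p i hp hmin hi1 hi2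
    have hw'min : ∀ q : Fin N, (q : ℕ) < (p : ℕ) → (h.val N w q : ℕ) = 0 := by
      intro q hq
      rw [hh.2 N w p q hp hmin (by omega) (by omega)]
      exact hmin q hq
    have hw'p : (h.val N w p : ℕ) ≠ 0 := by
      rw [FP hm h w p hmin]
      exact pid_ne_zero hm hh hp
    rw [mul_val, hg.2 N (h.val N w) p i hw'p hw'min hi1 hi2,
      hh.2 N w p i hp hmin hi1 hi2]

lemma pid_mul (g h : AutT m) (hh : Pd h) (n : ℕ) (x : Fin (m n)) :
    πd hm (g * h) n x = πd hm g n (πd hm h n x) := by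
  have h1 : (g * h).val (n + 1) (nbrV hm x) = g.val (n + 1) (nbrV hm (πd hm h n x)) := by
    rw [mul_val, KN hm hh x]
  calc πd hm (g * h) n x
      = (g * h).val (n + 1) (nbrV hm x) ⟨n, Nat.lt_succ_self n⟩ := rfl
    _ = g.val (n + 1) (nbrV hm (πd hm h n x)) ⟨n, Nat.lt_succ_self n⟩ := by rw [h1]
    _ = πd hm g n (πd hm h n x) := rfl

lemma taud_mul (g h : AutT m) (hh : Pd h) (n : ℕ) (x : Fin (m n)) (y : Fin (m (n + 1))) :
    τd hm (g * h) n x y = τd hm g n (πd hm h n x) (τd hm h n x y) := by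
  have h1 : (g * h).val (n + 2) (Wv hm x y) =
      g.val (n + 2) (Wv hm (πd hm h n x) (τd hm h n x y)) := by
    rw [mul_val, KW hm hh x y]
  calc τd hm (g * h) n x y
      = (g * h).val (n + 2) (Wv hm x y) ⟨n + 1, Nat.lt_succ_self (n + 1)⟩ := rfl
    _ = g.val (n + 2) (Wv hm (πd hm h n x) (τd hm h n x y)) ⟨n + 1, Nat.lt_succ_self (n + 1)⟩ :=
        by rw [h1]
    _ = τd hm g n (πd hm h n x) (τd hm h n x y) := rfl

include hm in
lemma Pd_inv {g : AutT m} (hg : Pd g) : Pd g⁻¹ := by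
  constructor
  · intro N w hw
    conv_lhs => rw [← hg.1 N w hw]
    exact coe_inv_app g N w
  · intro N w p i hp hmin hi1 hi2
    have hπs : Function.Surjective (πd hm g (p : ℕ)) :=
      Finite.injective_iff_surjective.mp (pid_inj hm hg (p : ℕ))
    obtain ⟨x', hx'⟩ := hπs (w p)
    have hx'0 : (x' : ℕ) ≠ 0 := by
      intro h0
      apply hp
      rw [← hx']
      exact pid_zero hm hg x' h0
    have hτs : Function.Surjective (τd hm g (p : ℕ) x') :=
      Finite.injective_iff_surjective.mp (taud_inj hm hg (p : ℕ) x')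
    classical
    set y' : Fin (m ((p : ℕ) + 1)) :=
      if h : (p : ℕ) + 1 < N then Classical.choose (hτs (w ⟨(p : ℕ) + 1, h⟩)) else ⟨0, hm _⟩
      with hy'
    set w' : Vertex m N := fun j =>
      if h1 : (j : ℕ) = (p : ℕ) then Fin.cast (congrArg m h1).symm x'
      else if h2 : (j : ℕ) = (p : ℕ) + 1 then Fin.cast (congrArg m h2).symm y'
      else w j with hw'
    have hw'val : ∀ j : Fin N, (w' j : ℕ) =
        if (j : ℕ) = (p : ℕ) then (x' : ℕ)
        else if (j : ℕ) = (p : ℕ) + 1 then (y' : ℕ) else (w j : ℕ) := by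
      intro j
      simp only [hw']
      by_cases a : (j : ℕ) = (p : ℕ)
      · rw [dif_pos a, if_pos a]
        simp
      · rw [dif_neg a, if_neg a]
        by_cases b : (j : ℕ) = (p : ℕ) + 1
        · rw [dif_pos b, if_pos b]
          simp
        · rw [dif_neg b, if_neg b]
    have hw'p : w' p = x' := by
      apply Fin.ext
      rw [hw'val]
      simp
    have hw'min : ∀ q : Fin N, (q : ℕ) < (p : ℕ) → (w' q : ℕ) = 0 := by
      intro q hq
      rw [hw'val, if_neg (by omega), if_neg (by omega)]
      exact hmin q hq
    have hw'pne : (w' p : ℕ) ≠ 0 := by rw [hw'p]; exact hx'0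
    have key : g.val N w' = w := by
      funext j
      by_cases hj1 : (j : ℕ) = (p : ℕ)
      · have hjp : j = p := Fin.ext hj1
        rw [hjp, FP hm g w' p hw'min, hw'p, hx']
      · by_cases hj2 : (j : ℕ) = (p : ℕ) + 1
        · have hlt : (p : ℕ) + 1 < N := hj2 ▸ j.2
          have hjp : j = ⟨(p : ℕ) + 1, hlt⟩ := Fin.ext hj2
          rw [hjp, FT hm g w' p hlt hw'min, hw'p]
          have hw'top : w' ⟨(p : ℕ) + 1, hlt⟩ = y' := by
            apply Fin.ext
            rw [hw'val, if_neg (by omega), if_pos rfl]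
          rw [hw'top, hy']
          rw [dif_pos hlt]
          exact Classical.choose_spec (hτs (w ⟨(p : ℕ) + 1, hlt⟩))
        · rw [hg.2 N w' p j hw'pne hw'min hj1 hj2]
          apply Fin.ext
          rw [hw'val, if_neg hj1, if_neg hj2]
    have hinv : g⁻¹.val N w = w' := by
      conv_lhs => rw [← key]
      exact coe_inv_app g N w'
    rw [hinv]
    apply Fin.ext
    rw [hw'val, if_neg hi1, if_neg hi2]

/-- Above the level of a trivial section nothing moves. -/
lemma sec_triv_high (g : AutT m) {n k : ℕ} (u : Vertex m (n + k))
    (hsec : sectionAut g (restrLe (Nat.le_add_right n k) u) = 1)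
    (i : Fin (n + k)) (hi : n ≤ (i : ℕ)) : g.val (n + k) u i = u i := by
  set w0 := restrLe (Nat.le_add_right n k) u with hw0
  have h1 : g.val (n + k) u = vappend (secFun g w0 k (topPart u)) (g.val n w0) := by
    conv_lhs => rw [← vappend_topPart u]
    exact secFun_spec g w0 k (topPart u)
  have h3 : sectionEquiv g w0 k = 1 := congrFun (congrArg Subtype.val hsec) k
  have h2 : secFun g w0 k (topPart u) = topPart u := DFunLike.congr_fun h3 (topPart u)
  rw [h1, h2]
  apply Fin.ext
  have hni : ¬ (i : ℕ) < n := by omega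
  show ((vappend (topPart u) (g.val n w0)) i : ℕ) = (u i : ℕ)
  simp only [vappend, dif_neg hni, Fin.coe_cast, topPart]
  have hidx : (⟨n + ((i : ℕ) - n), by omega⟩ : Fin (n + k)) = i := Fin.ext (by simp; omega)
  exact congrArg (fun j : Fin (n + k) => (u j : ℕ)) hidx

/-- Directed automorphisms satisfy the structural predicate. -/
lemma dirPd {h : AutT m} (hd : IsDirectedAut h) : Pd h := by
  refine ⟨hd.1, ?_⟩
  intro N w p i hp hmin hi1 hi2
  rcases Nat.lt_or_ge (i : ℕ) (p : ℕ) with hlt | hge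
  · have hray : OnRay (restrLe (le_of_lt p.2) w) := by
      intro j
      exact hmin ⟨(j : ℕ), by omega⟩ j.2
    have h1 := restrLe_app h (le_of_lt p.2) w
    rw [hd.1 (p : ℕ) _ hray] at h1
    exact congrFun h1 ⟨(i : ℕ), hlt⟩
  · have hgt : (p : ℕ) + 1 < (i : ℕ) := by omega
    have hiN : (i : ℕ) < N := i.2
    have hnN : (p : ℕ) + 2 ≤ N := by omega
    have hNk : N = ((p : ℕ) + 2) + (N - ((p : ℕ) + 2)) := by omega
    set u := vcast hNk w with hu
    set w0 := restrLe (Nat.le_add_right ((p : ℕ) + 2) (N - ((p : ℕ) + 2))) u with hw0v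
    have hw0val : ∀ j : Fin ((p : ℕ) + 2), (w0 j : ℕ) = (w ⟨(j : ℕ), by omega⟩ : ℕ) :=
      fun j => rfl
    have hray : ¬ OnRay w0 := by
      intro hray
      apply hp
      have := hray ⟨(p : ℕ), by omega⟩
      rw [hw0val] at this
      exact this
    have hnbr : ¬ IsNbr w0 := by
      rintro ⟨hn0, htop, hzero⟩
      have := hzero ⟨(p : ℕ), by omega⟩ (by simp only [Fin.val_mk]; omega)
      rw [hw0val] at this
      exact hp this
    have hsec := hd.2.1 ((p : ℕ) + 2) w0 hray hnbr
    have hkey := sec_triv_high h u hsec ⟨(i : ℕ), by omega⟩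
      (by simp only [Fin.val_mk]; omega)
    have h4 := gval_vcast h hNk w
    apply Fin.ext
    have h5 : (h.val N w i : ℕ) =
        (h.val (((p : ℕ) + 2) + (N - ((p : ℕ) + 2))) u ⟨(i : ℕ), by omega⟩ : ℕ) := by
      rw [hu, h4]
      rfl
    rw [h5, hkey]
    rfl

/-- Two automorphisms with the structural property and the same data coincide. -/
lemma pd_ext {g g' : AutT m} (hg : Pd g) (hg' : Pd g')
    (hπ : ∀ (n : ℕ) (x : Fin (m n)), πd hm g n x = πd hm g' n x)
    (hτ : ∀ (n : ℕ) (x : Fin (m n)) (y : Fin (m (n + 1))), τd hm g n x y = τd hm g' n x y) :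
    g = g' := by
  apply Subtype.ext
  funext N
  apply Equiv.ext
  intro w
  by_cases hw : ∀ i, (w i : ℕ) = 0
  · rw [hg.1 N w hw, hg'.1 N w hw]
  · push_neg at hw
    obtain ⟨j, hj⟩ := hw
    classical
    have hex : ∃ t, ∃ ht : t < N, (w ⟨t, ht⟩ : ℕ) ≠ 0 := ⟨(j : ℕ), j.2, hj⟩
    obtain ⟨htN, hwt⟩ := Nat.find_spec hex
    set p : Fin N := ⟨Nat.find hex, htN⟩ with hpdef
    have hmin : ∀ q : Fin N, (q : ℕ) < (p : ℕ) → (w q : ℕ) = 0 := by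
      intro q hq
      by_contra hq0
      exact Nat.find_min hex hq ⟨q.2, hq0⟩
    apply vext
    intro i
    by_cases h1 : (i : ℕ) = (p : ℕ)
    · have hip : i = p := Fin.ext h1
      rw [hip, FP hm g w p hmin, FP hm g' w p hmin, hπ]
    · by_cases h2 : (i : ℕ) = (p : ℕ) + 1
      · have hlt : (p : ℕ) + 1 < N := h2 ▸ i.2
        have hip : i = ⟨(p : ℕ) + 1, hlt⟩ := Fin.ext h2
        rw [hip, FT hm g w p hlt hmin, FT hm g' w p hlt hmin, hτ]
      · rw [hg.2 N w p i hwt hmin h1 h2, hg'.2 N w p i hwt hmin h1 h2]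

variable {M : ℕ} (hbd : ∀ i, m i ≤ M)

/-- The level-`n` data of `g`, encoded as a self-map of `Fin M × Fin M`. -/
def ψd (n : ℕ) (g : AutT m) : Fin M × Fin M → Fin M × Fin M := fun q =>
  if h : (q.1 : ℕ) < m n ∧ (q.2 : ℕ) < m (n + 1) then
    (⟨(πd hm g n ⟨(q.1 : ℕ), h.1⟩ : ℕ), lt_of_lt_of_le (Fin.is_lt _) (hbd n)⟩,
     ⟨(τd hm g n ⟨(q.1 : ℕ), h.1⟩ ⟨(q.2 : ℕ), h.2⟩ : ℕ), lt_of_lt_of_le (Fin.is_lt _) (hbd (n + 1))⟩)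
  else q

lemma psid_one (n : ℕ) : ψd hm hbd n (1 : AutT m) = id := by
  funext q
  show ψd hm hbd n 1 q = q
  by_cases h : (q.1 : ℕ) < m n ∧ (q.2 : ℕ) < m (n + 1)
  · have e : ψd hm hbd n 1 q =
        (⟨(πd hm (1 : AutT m) n ⟨(q.1 : ℕ), h.1⟩ : ℕ), lt_of_lt_of_le (Fin.is_lt _) (hbd n)⟩,
         ⟨(τd hm (1 : AutT m) n ⟨(q.1 : ℕ), h.1⟩ ⟨(q.2 : ℕ), h.2⟩ : ℕ),
           lt_of_lt_of_le (Fin.is_lt _) (hbd (n + 1))⟩) := dif_pos h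
    have e1 : (πd hm (1 : AutT m) n ⟨(q.1 : ℕ), h.1⟩ : ℕ) = (q.1 : ℕ) := by
      show ((nbrV hm (⟨(q.1 : ℕ), h.1⟩ : Fin (m n)) ⟨n, Nat.lt_succ_self n⟩ : Fin (m n)) : ℕ) = _
      rw [nbrV_val]
      simp
    have e2 : (τd hm (1 : AutT m) n ⟨(q.1 : ℕ), h.1⟩ ⟨(q.2 : ℕ), h.2⟩ : ℕ) = (q.2 : ℕ) := by
      show ((Wv hm (⟨(q.1 : ℕ), h.1⟩ : Fin (m n)) (⟨(q.2 : ℕ), h.2⟩ : Fin (m (n + 1)))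
        ⟨n + 1, Nat.lt_succ_self (n + 1)⟩ : Fin (m (n + 1))) : ℕ) = _
      rw [Wv_val]
      simp
    rw [e, Prod.ext_iff]
    exact ⟨Fin.ext e1, Fin.ext e2⟩
  · exact dif_neg h

lemma psid_mul (n : ℕ) (g h : AutT m) (hh : Pd h) :
    ψd hm hbd n (g * h) = ψd hm hbd n g ∘ ψd hm hbd n h := by
  funext q
  show ψd hm hbd n (g * h) q = ψd hm hbd n g (ψd hm hbd n h q)
  by_cases hq : (q.1 : ℕ) < m n ∧ (q.2 : ℕ) < m (n + 1)
  · have egh : ψd hm hbd n (g * h) q =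
        (⟨(πd hm (g * h) n ⟨(q.1 : ℕ), hq.1⟩ : ℕ), lt_of_lt_of_le (Fin.is_lt _) (hbd n)⟩,
         ⟨(τd hm (g * h) n ⟨(q.1 : ℕ), hq.1⟩ ⟨(q.2 : ℕ), hq.2⟩ : ℕ),
           lt_of_lt_of_le (Fin.is_lt _) (hbd (n + 1))⟩) := dif_pos hq
    have eh : ψd hm hbd n h q =
        (⟨(πd hm h n ⟨(q.1 : ℕ), hq.1⟩ : ℕ), lt_of_lt_of_le (Fin.is_lt _) (hbd n)⟩,
         ⟨(τd hm h n ⟨(q.1 : ℕ), hq.1⟩ ⟨(q.2 : ℕ), hq.2⟩ : ℕ),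
           lt_of_lt_of_le (Fin.is_lt _) (hbd (n + 1))⟩) := dif_pos hq
    have hcond2 :
        ((⟨(πd hm h n ⟨(q.1 : ℕ), hq.1⟩ : ℕ), lt_of_lt_of_le (Fin.is_lt _) (hbd n)⟩ : Fin M) : ℕ)
          < m n ∧
        ((⟨(τd hm h n ⟨(q.1 : ℕ), hq.1⟩ ⟨(q.2 : ℕ), hq.2⟩ : ℕ),
            lt_of_lt_of_le (Fin.is_lt _) (hbd (n + 1))⟩ : Fin M) : ℕ) < m (n + 1) :=
      ⟨(πd hm h n ⟨(q.1 : ℕ), hq.1⟩).2, (τd hm h n ⟨(q.1 : ℕ), hq.1⟩ ⟨(q.2 : ℕ), hq.2⟩).2⟩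
    have eg : ψd hm hbd n g
        ((⟨(πd hm h n ⟨(q.1 : ℕ), hq.1⟩ : ℕ), lt_of_lt_of_le (Fin.is_lt _) (hbd n)⟩ : Fin M),
         (⟨(τd hm h n ⟨(q.1 : ℕ), hq.1⟩ ⟨(q.2 : ℕ), hq.2⟩ : ℕ),
            lt_of_lt_of_le (Fin.is_lt _) (hbd (n + 1))⟩ : Fin M)) =
        (⟨(πd hm g n (πd hm h n ⟨(q.1 : ℕ), hq.1⟩) : ℕ),
            lt_of_lt_of_le (Fin.is_lt _) (hbd n)⟩,
         ⟨(τd hm g n (πd hm h n ⟨(q.1 : ℕ), hq.1⟩)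
              (τd hm h n ⟨(q.1 : ℕ), hq.1⟩ ⟨(q.2 : ℕ), hq.2⟩) : ℕ),
            lt_of_lt_of_le (Fin.is_lt _) (hbd (n + 1))⟩) := dif_pos hcond2
    have c1 : (πd hm (g * h) n ⟨(q.1 : ℕ), hq.1⟩ : ℕ) =
        (πd hm g n (πd hm h n ⟨(q.1 : ℕ), hq.1⟩) : ℕ) :=
      congrArg Fin.val (pid_mul hm g h hh n ⟨(q.1 : ℕ), hq.1⟩)
    have c2 : (τd hm (g * h) n ⟨(q.1 : ℕ), hq.1⟩ ⟨(q.2 : ℕ), hq.2⟩ : ℕ) =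
        (τd hm g n (πd hm h n ⟨(q.1 : ℕ), hq.1⟩)
          (τd hm h n ⟨(q.1 : ℕ), hq.1⟩ ⟨(q.2 : ℕ), hq.2⟩) : ℕ) :=
      congrArg Fin.val (taud_mul hm g h hh n ⟨(q.1 : ℕ), hq.1⟩ ⟨(q.2 : ℕ), hq.2⟩)
    rw [egh, eh, eg, Prod.ext_iff]
    exact ⟨Fin.ext c1, Fin.ext c2⟩
  · have e1 : ψd hm hbd n (g * h) q = q := dif_neg hq
    have e2 : ψd hm hbd n h q = q := dif_neg hq
    have e3 : ψd hm hbd n g q = q := dif_neg hq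
    rw [e1, e2, e3]

lemma psid_ext {g g' : AutT m} (hg : Pd g) (hg' : Pd g')
    (hψ : ∀ n, ψd hm hbd n g = ψd hm hbd n g') : g = g' := by
  apply pd_ext hm hg hg'
  · intro n x
    have hcond : ((⟨(x : ℕ), lt_of_lt_of_le x.2 (hbd n)⟩ : Fin M) : ℕ) < m n ∧
        ((⟨0, lt_of_lt_of_le (hm (n + 1)) (hbd (n + 1))⟩ : Fin M) : ℕ) < m (n + 1) :=
      ⟨x.2, hm (n + 1)⟩
    have e := congrFun (hψ n)
      (⟨(x : ℕ), lt_of_lt_of_le x.2 (hbd n)⟩, ⟨0, lt_of_lt_of_le (hm (n + 1)) (hbd (n + 1))⟩)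
    simp only [ψd] at e
    rw [dif_pos hcond, dif_pos hcond] at e
    have e1 := congrArg (fun z : Fin M × Fin M => ((z.1 : Fin M) : ℕ)) e
    exact Fin.ext e1
  · intro n x y
    have hcond : ((⟨(x : ℕ), lt_of_lt_of_le x.2 (hbd n)⟩ : Fin M) : ℕ) < m n ∧
        ((⟨(y : ℕ), lt_of_lt_of_le y.2 (hbd (n + 1))⟩ : Fin M) : ℕ) < m (n + 1) :=
      ⟨x.2, y.2⟩
    have e := congrFun (hψ n)
      (⟨(x : ℕ), lt_of_lt_of_le x.2 (hbd n)⟩, ⟨(y : ℕ), lt_of_lt_of_le y.2 (hbd (n + 1))⟩)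
    simp only [ψd] at e
    rw [dif_pos hcond, dif_pos hcond] at e
    have e2 := congrArg (fun z : Fin M × Fin M => ((z.2 : Fin M) : ℕ)) e
    exact Fin.ext e2

end LocFin

/-- For a bounded valency sequence, the group `H_m̄` of directed
automorphisms along the `0`-ray is locally finite: every finite set of directed
automorphisms generates a finite subgroup. -/
theorem directed_automorphisms_locally_finite
    (m : ℕ → ℕ) (hm : ∀ i, 0 < m i) (hm2 : ∀ i, 2 ≤ m i)
    (M : ℕ) (hbd : ∀ i, m i ≤ M)
    (F : Set (AutT m)) (hF : F.Finite) (hdir : ∀ h ∈ F, IsDirectedAut h) :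
    ((Subgroup.closure F : Subgroup (AutT m)) : Set (AutT m)).Finite := by
  classical
  -- every element of the closure satisfies the structural predicate
  have hPd : ∀ g ∈ Subgroup.closure F, Pd g ∧ Pd g⁻¹ := by
    intro g hg
    refine Subgroup.closure_induction (p := fun x _ => Pd x ∧ Pd x⁻¹) ?_ ?_ ?_ ?_ hg
    · intro x hx
      have h1 := dirPd (hdir x hx)
      exact ⟨h1, Pd_inv hm h1⟩
    · exact ⟨Pd_one, by rw [inv_one]; exact Pd_one⟩
    · intro a b _ _ ha hb
      exact ⟨Pd_mul hm ha.1 hb.1, by rw [mul_inv_rev]; exact Pd_mul hm hb.2 ha.2⟩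
    · intro a _ ha
      exact ⟨ha.2, by rw [inv_inv]; exact ha.1⟩
  -- if two level data maps agree on the generators, they agree on the closure
  have hAgree : ∀ n n', (∀ f ∈ F, ψd hm hbd n f = ψd hm hbd n' f) →
      ∀ g ∈ Subgroup.closure F, ψd hm hbd n g = ψd hm hbd n' g := by
    intro n n' hFn g hg
    refine (Subgroup.closure_induction
      (p := fun x _ => ψd hm hbd n x = ψd hm hbd n' x ∧
        ψd hm hbd n x⁻¹ = ψd hm hbd n' x⁻¹) ?_ ?_ ?_ ?_ hg).1
    · intro x hx
      refine ⟨hFn x hx, ?_⟩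
      have hx' : x ∈ Subgroup.closure F := Subgroup.subset_closure hx
      have hPx := hPd x hx'
      have l1 : ψd hm hbd n x ∘ ψd hm hbd n x⁻¹ = id := by
        rw [← psid_mul hm hbd n x x⁻¹ hPx.2, mul_inv_cancel, psid_one]
      have r1 : ψd hm hbd n' x⁻¹ ∘ ψd hm hbd n' x = id := by
        rw [← psid_mul hm hbd n' x⁻¹ x hPx.1, inv_mul_cancel, psid_one]
      calc ψd hm hbd n x⁻¹ = (ψd hm hbd n' x⁻¹ ∘ ψd hm hbd n' x) ∘ ψd hm hbd n x⁻¹ := by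
            rw [r1, Function.id_comp]
        _ = ψd hm hbd n' x⁻¹ ∘ (ψd hm hbd n' x ∘ ψd hm hbd n x⁻¹) := rfl
        _ = ψd hm hbd n' x⁻¹ ∘ (ψd hm hbd n x ∘ ψd hm hbd n x⁻¹) := by rw [hFn x hx]
        _ = ψd hm hbd n' x⁻¹ := by rw [l1, Function.comp_id]
    · exact ⟨by rw [psid_one hm hbd n, psid_one hm hbd n'],
        by rw [inv_one, psid_one hm hbd n, psid_one hm hbd n']⟩
    · intro a b ha' hb' pa pb
      constructor
      · rw [psid_mul hm hbd n a b (hPd b hb').1, psid_mul hm hbd n' a b (hPd b hb').1,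
          pa.1, pb.1]
      · rw [mul_inv_rev, psid_mul hm hbd n _ _ (hPd a ha').2,
          psid_mul hm hbd n' _ _ (hPd a ha').2, pa.2, pb.2]
    · intro a _ pa
      exact ⟨pa.2, by rw [inv_inv]; exact pa.1⟩
  -- the injection into a finite type
  let ρ : ℕ → (↥F → (Fin M × Fin M → Fin M × Fin M)) := fun n f => ψd hm hbd n f.1
  let Φ : ↥(Subgroup.closure F) →
      ((↥F → (Fin M × Fin M → Fin M × Fin M)) → (Fin M × Fin M → Fin M × Fin M)) := fun g d =>
    if h : ∃ n, ρ n = d then ψd hm hbd h.choose g.1 else id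
  have hΦinj : Function.Injective Φ := by
    intro g g' hgg'
    have hψall : ∀ n, ψd hm hbd n g.1 = ψd hm hbd n g'.1 := by
      intro n
      have hex : ∃ n', ρ n' = ρ n := ⟨n, rfl⟩
      have h2 := congrFun hgg' (ρ n)
      simp only [Φ, dif_pos hex] at h2
      have hfa : ∀ f ∈ F, ψd hm hbd hex.choose f = ψd hm hbd n f := by
        intro f hf
        exact congrFun hex.choose_spec ⟨f, hf⟩
      rw [← hAgree hex.choose n hfa g.1 g.2, ← hAgree hex.choose n hfa g'.1 g'.2]
      exact h2
    exact Subtype.ext (psid_ext hm hbd (hPd g.1 g.2).1 (hPd g'.1 g'.2).1 hψall)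
  haveI : Finite ↥F := hF.to_subtype
  exact Set.finite_coe_iff.mp (Finite.of_injective Φ hΦinj)

end Paper
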